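/- Let A and V be finite sets, φ, ψ binary operations on A, and S a set of functions V → A closed under the pointwise operations: for all f, g ∈ S, the functions v ↦ φ (f v) (g v) and v ↦ ψ (f v) (g v) belong to S. Let M : (V → A) → ℕ satisfy M(φ(f,g)) + M(ψ(f,g)) ≤ M(f) + M(g) for all f, g ∈ S, where φ(f,g)(v) = φ (f v) (g v) and ψ(f,g)(v) = ψ (f v) (g v). Let v ∈ V and a, b ∈ A be such that φ a b = φ b a = b and ψ a b = ψ b a = b, and suppose there exist f ∈ S with f v = a and g ∈ S with g v = b. Then min { M(f) : f ∈ S, f v = b } ≤ min { M(f) : f ∈ S, f v = a }. -/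
import Mathlib


/-- The pruning lemma: if `φ` and `ψ` both send the pair `{a, b}` to `b`, the
solution set `S` is closed under the pointwise operations, and the measure `M`
satisfies the multimorphism inequality on `S`, then the minimum of `M` over
solutions with value `b` at `v` is at most the minimum over solutions with
value `a` at `v`. -/
theorem pruning_lemma {A V : Type*} [Fintype A] [Fintype V]
    (φ ψ : A → A → A) (S : Set (V → A))
    (hclosed : ∀ f ∈ S, ∀ g ∈ S,
      (fun v => φ (f v) (g v)) ∈ S ∧ (fun v => ψ (f v) (g v)) ∈ S)
    (M : (V → A) → ℕ)
    (hM : ∀ f ∈ S, ∀ g ∈ S,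
      M (fun v => φ (f v) (g v)) + M (fun v => ψ (f v) (g v)) ≤ M f + M g)
    (v : V) (a b : A)
    (hφab : φ a b = b ∧ φ b a = b) (hψab : ψ a b = b ∧ ψ b a = b)
    (ha : ∃ f ∈ S, f v = a) (hb : ∃ g ∈ S, g v = b) :
    sInf {k : ℕ | ∃ f ∈ S, f v = b ∧ M f = k} ≤
      sInf {k : ℕ | ∃ f ∈ S, f v = a ∧ M f = k} := by
  set B := {k : ℕ | ∃ f ∈ S, f v = b ∧ M f = k} with hB
  set Aset := {k : ℕ | ∃ f ∈ S, f v = a ∧ M f = k} with hA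
  have hAne : Aset.Nonempty := by
    obtain ⟨f, hf, hfv⟩ := ha
    exact ⟨M f, f, hf, hfv, rfl⟩
  have hBne : B.Nonempty := by
    obtain ⟨g, hg, hgv⟩ := hb
    exact ⟨M g, g, hg, hgv, rfl⟩
  obtain ⟨f, hfS, hfv, hfM⟩ := Nat.sInf_mem hAne
  obtain ⟨g, hgS, hgv, hgM⟩ := Nat.sInf_mem hBne
  by_contra hlt
  push_neg at hlt
  have hφS := (hclosed f hfS g hgS).1
  have hψS := (hclosed f hfS g hgS).2
  have hφv : (fun w => φ (f w) (g w)) v = b := by simp [hfv, hgv, hφab.1]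
  have hψv : (fun w => ψ (f w) (g w)) v = b := by simp [hfv, hgv, hψab.1]
  have h1 : sInf B ≤ M (fun w => φ (f w) (g w)) :=
    Nat.sInf_le ⟨_, hφS, hφv, rfl⟩
  have h2 : sInf B ≤ M (fun w => ψ (f w) (g w)) :=
    Nat.sInf_le ⟨_, hψS, hψv, rfl⟩
  have h3 := hM f hfS g hgS
  omega
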